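/- For every t > 0 and every x ∈ ℝ², ∫_{ℝ²} p_t(y) · | log|y − x| | dy ≤ 1/t + |x| + ∫_{ℝ²} p_t(y) |y| dy; consequently limsup_{x → 0} ∫_{ℝ²} p_t(y) | log|y − x| | dy < ∞. -/

import Mathlib

open Filter

/-- Transition density of `d`-dimensional Brownian motion. -/
noncomputable def p (d : ℕ) (t : ℝ) (y : EuclideanSpace ℝ (Fin d)) : ℝ :=
  (2 * Real.pi * t) ^ (-(d : ℝ) / 2) * Real.exp (-‖y‖ ^ 2 / (2 * t))

open Real MeasureTheory Set intervalIntegral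

lemma hasDerivAt_aux {x : ℝ} (hx : x ≠ 0) :
    HasDerivAt (fun x : ℝ => x - x * Real.log x) (-Real.log x) x := by
  have h1 := Real.hasDerivAt_mul_log hx
  have := (hasDerivAt_id' x).sub h1
  exact this.congr_deriv (by ring)

lemma intOn_neg_log : IntegrableOn (fun a : ℝ => -Real.log a) (Set.Ioc 0 1) := by
  refine integrableOn_deriv_of_nonneg ?_ (fun x hx => hasDerivAt_aux (ne_of_gt hx.1)) ?_
  · exact (continuous_id.sub Real.continuous_mul_log).continuousOn
  · exact fun x hx => neg_nonneg.2 (Real.log_nonpos hx.1.le hx.2.le)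

lemma intervalInt_neg_log : IntervalIntegrable (fun a : ℝ => -Real.log a) volume 0 1 :=
  (intervalIntegrable_iff_integrableOn_Ioc_of_le zero_le_one).2 intOn_neg_log

lemma integral_neg_log : ∫ a in (0:ℝ)..1, -Real.log a = 1 := by
  have h := intervalIntegral.integral_eq_sub_of_hasDerivAt_of_le zero_le_one
    ((continuous_id.sub Real.continuous_mul_log).continuousOn)
    (fun x hx => hasDerivAt_aux (ne_of_gt hx.1)) intervalInt_neg_log
  simpa using h

lemma intervalInt_f01 : IntervalIntegrable (fun a : ℝ => -Real.log |a|) volume 0 1 :=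
  (intervalIntegrable_iff_integrableOn_Ioc_of_le zero_le_one).2
    (intOn_neg_log.congr_fun (fun a ha => by rw [abs_of_pos ha.1]) measurableSet_Ioc)

lemma intervalInt_fneg : IntervalIntegrable (fun a : ℝ => -Real.log |a|) volume (-1) 0 := by
  rw [IntervalIntegrable.iff_comp_neg]
  simpa using intervalInt_f01.symm

lemma intervalInt_f : IntervalIntegrable (fun a : ℝ => -Real.log |a|) volume (-1) 1 :=
  intervalInt_fneg.trans intervalInt_f01

lemma integral_f01 : ∫ a in (0:ℝ)..1, -Real.log |a| = 1 := by
  have h : ∫ a in (0:ℝ)..1, -Real.log |a| = ∫ a in (0:ℝ)..1, -Real.log a := by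
    apply intervalIntegral.integral_congr
    intro a ha
    rw [Set.uIcc_of_le zero_le_one] at ha
    rcases eq_or_lt_of_le ha.1 with h | h
    · simp [← h]
    · simp only [abs_of_pos h]
  rw [h, integral_neg_log]

lemma integral_fneg : ∫ a in (-1:ℝ)..0, -Real.log |a| = 1 := by
  have h := intervalIntegral.integral_comp_neg (a := (0:ℝ)) (b := 1)
    (f := fun a : ℝ => -Real.log |a|)
  simp only [abs_neg, neg_zero, neg_neg] at h
  rw [← h]
  · exact integral_f01

lemma integral_f : ∫ a in (-1:ℝ)..1, -Real.log |a| = 2 := by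
  rw [← intervalIntegral.integral_add_adjacent_intervals intervalInt_fneg intervalInt_f01,
    integral_f01, integral_fneg]
  norm_num

noncomputable def uu : ℝ → ℝ := Set.indicator (Icc (-1) 1) (fun a => -Real.log |a|)
noncomputable def vv : ℝ → ℝ := Set.indicator (Icc (-1) 1) (fun _ => 1)

lemma integrable_uu : Integrable uu := by
  rw [uu, integrable_indicator_iff measurableSet_Icc, integrableOn_Icc_iff_integrableOn_Ioc]
  exact (intervalIntegrable_iff_integrableOn_Ioc_of_le (by norm_num)).1 intervalInt_f

lemma integral_uu : ∫ a, uu a = 2 := by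
  rw [uu, MeasureTheory.integral_indicator measurableSet_Icc, integral_Icc_eq_integral_Ioc,
    ← intervalIntegral.integral_of_le (by norm_num : (-1:ℝ) ≤ 1)]
  exact integral_f

lemma integrable_vv : Integrable vv := by
  rw [vv, integrable_indicator_iff measurableSet_Icc]
  exact integrableOn_const (by rw [Real.volume_Icc]; exact ENNReal.ofReal_ne_top)

lemma integral_vv : ∫ a, vv a = 2 := by
  rw [vv, integral_indicator_const _ measurableSet_Icc, Real.volume_real_Icc]
  norm_num

lemma uu_nonneg (a : ℝ) : 0 ≤ uu a := by
  refine Set.indicator_nonneg (fun x hx => ?_) a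
  exact neg_nonneg.2 (Real.log_nonpos (abs_nonneg x) (abs_le.2 ⟨hx.1, hx.2⟩))

lemma vv_nonneg (a : ℝ) : 0 ≤ vv a := Set.indicator_nonneg (fun _ _ => zero_le_one) a

noncomputable def TT : (ℝ × ℝ) ≃ᵐ EuclideanSpace ℝ (Fin 2) :=
  (((MeasurableEquiv.toLp 2 (Fin 2 → ℝ)).symm).trans MeasurableEquiv.finTwoArrow).symm

lemma TT_mp : MeasurePreserving TT := by
  have h1 : MeasurePreserving (((MeasurableEquiv.toLp 2 (Fin 2 → ℝ)).symm).trans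
      MeasurableEquiv.finTwoArrow) :=
    (volume_preserving_finTwoArrow ℝ).comp (EuclideanSpace.volume_preserving_symm_measurableEquiv_toLp (Fin 2))
  exact h1.symm _

lemma TT_norm (q : ℝ × ℝ) : ‖TT q‖ = Real.sqrt (q.1^2 + q.2^2) := by
  simp [TT, EuclideanSpace.norm_eq, MeasurableEquiv.finTwoArrow, MeasurableEquiv.piFinTwo,
    MeasurableEquiv.trans, MeasurableEquiv.symm, MeasurableEquiv.toLp,
    Fin.sum_univ_two, sq_abs]

noncomputable def Phi : EuclideanSpace ℝ (Fin 2) → ℝ :=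
  Set.indicator (Metric.ball 0 1) (fun z => -Real.log ‖z‖)

lemma Phi_nonneg (z : EuclideanSpace ℝ (Fin 2)) : 0 ≤ Phi z := by
  refine Set.indicator_nonneg (fun x hx => ?_) z
  rw [mem_ball_zero_iff] at hx
  exact neg_nonneg.2 (Real.log_nonpos (norm_nonneg x) hx.le)

lemma measurable_Phi : Measurable Phi :=
  ((Real.measurable_log.comp continuous_norm.measurable).neg).indicator measurableSet_ball

lemma null_fst : (volume : Measure (ℝ × ℝ)) {q : ℝ × ℝ | q.1 = 0} = 0 := by
  have h : {q : ℝ × ℝ | q.1 = 0} = ({0} : Set ℝ) ×ˢ (Set.univ : Set ℝ) := by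
    ext q
    simp only [Set.mem_setOf_eq, Set.mem_prod, Set.mem_singleton_iff, Set.mem_univ, and_true]
  rw [h, Measure.volume_eq_prod, Measure.prod_prod]
  simp

lemma Phi_TT_le : ∀ᵐ q : ℝ × ℝ, Phi (TT q) ≤ uu q.1 * vv q.2 := by
  rw [ae_iff]
  refine measure_mono_null (fun q hq => ?_) null_fst
  simp only [Set.mem_setOf_eq, not_le] at hq ⊢
  by_contra hq1
  apply absurd hq; push_neg
  have ha : |q.1| ≤ ‖TT q‖ := by
    rw [TT_norm, ← Real.sqrt_sq_eq_abs]
    exact Real.sqrt_le_sqrt (by nlinarith)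
  have hb : |q.2| ≤ ‖TT q‖ := by
    rw [TT_norm, ← Real.sqrt_sq_eq_abs]
    exact Real.sqrt_le_sqrt (by nlinarith)
  by_cases hr : ‖TT q‖ < 1
  · have hmem : TT q ∈ Metric.ball (0 : EuclideanSpace ℝ (Fin 2)) 1 := mem_ball_zero_iff.2 hr
    rw [Phi, Set.indicator_of_mem hmem]
    have h1 : q.1 ∈ Set.Icc (-1:ℝ) 1 := abs_le.1 (ha.trans hr.le)
    have h2 : q.2 ∈ Set.Icc (-1:ℝ) 1 := abs_le.1 (hb.trans hr.le)
    rw [uu, Set.indicator_of_mem h1, vv, Set.indicator_of_mem h2, mul_one]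
    have h0 : 0 < |q.1| := abs_pos.2 hq1
    exact neg_le_neg (Real.log_le_log h0 ha)
  · rw [Phi, Set.indicator_of_notMem (by simpa [mem_ball_zero_iff] using hr)]
    exact mul_nonneg (uu_nonneg _) (vv_nonneg _)

lemma integrable_chi : Integrable (fun q : ℝ × ℝ => uu q.1 * vv q.2) := by
  rw [Measure.volume_eq_prod]
  exact integrable_uu.mul_prod integrable_vv

lemma integral_chi : ∫ q : ℝ × ℝ, uu q.1 * vv q.2 = 4 := by
  rw [Measure.volume_eq_prod, integral_prod_mul, integral_uu, integral_vv]
  norm_num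

lemma integrable_Phi : Integrable Phi := by
  rw [← TT_mp.integrable_comp_emb TT.measurableEmbedding]
  refine Integrable.mono' integrable_chi
    ((measurable_Phi.comp TT.measurable).aestronglyMeasurable) ?_
  filter_upwards [Phi_TT_le] with q hq
  simpa [Function.comp, abs_of_nonneg (Phi_nonneg (TT q))] using hq

lemma integral_Phi_le : ∫ z, Phi z ≤ 4 := by
  rw [← TT_mp.integral_comp TT.measurableEmbedding Phi, ← integral_chi]
  refine integral_mono_of_nonneg (Filter.Eventually.of_forall fun q => Phi_nonneg (TT q))
    integrable_chi Phi_TT_le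

lemma integrable_gauss {b : ℝ} (hb : 0 < b) :
    Integrable (fun y : EuclideanSpace ℝ (Fin 2) => Real.exp (-b * ‖y‖^2)) := by
  have h := (GaussianFourier.integrable_cexp_neg_mul_sq_norm_add
    (V := EuclideanSpace ℝ (Fin 2)) (b := (b:ℂ)) (by simpa using hb) 0 0).norm
  refine h.congr (Filter.Eventually.of_forall fun y => ?_)
  simp [Complex.norm_exp]
  exact Or.inl (by simp [← Complex.ofReal_pow])

lemma integrable_gauss_norm {b : ℝ} (hb : 0 < b) :
    Integrable (fun y : EuclideanSpace ℝ (Fin 2) => Real.exp (-b * ‖y‖^2) * ‖y‖) := by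
  have hcont : Continuous fun y : EuclideanSpace ℝ (Fin 2) => Real.exp (-b * ‖y‖^2) * ‖y‖ :=
    (Real.continuous_exp.comp (continuous_const.mul (continuous_norm.pow 2))).mul continuous_norm
  refine Integrable.mono' ((integrable_gauss hb).add
    ((integrable_gauss (half_pos hb)).const_mul (2/b)))
    hcont.aestronglyMeasurable (Filter.Eventually.of_forall fun y => ?_)
  set r := ‖y‖ with hrdef
  have hr0 : 0 ≤ r := norm_nonneg _
  rw [Real.norm_eq_abs, abs_of_nonneg (by positivity)]
  have h1 : r ≤ 1 + r^2 := by nlinarith [sq_nonneg (r-1)]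
  have h3 : (b/2)*r^2 ≤ Real.exp ((b/2)*r^2) := by linarith [Real.add_one_le_exp ((b/2)*r^2)]
  have h4 : r^2 ≤ (2/b) * Real.exp ((b/2)*r^2) := by
    have h5 := mul_le_mul_of_nonneg_left h3 (by positivity : (0:ℝ) ≤ 2/b)
    calc r^2 = (2/b)*((b/2)*r^2) := by field_simp
      _ ≤ (2/b) * Real.exp ((b/2)*r^2) := h5
  have h2 : r^2 * Real.exp (-(b/2)*r^2) ≤ 2/b := by
    have hz : (b/2)*r^2 + -(b/2)*r^2 = 0 := by ring
    calc r^2 * Real.exp (-(b/2)*r^2)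
        ≤ ((2/b) * Real.exp ((b/2)*r^2)) * Real.exp (-(b/2)*r^2) :=
          mul_le_mul_of_nonneg_right h4 (Real.exp_pos _).le
      _ = 2/b := by rw [mul_assoc, ← Real.exp_add, hz, Real.exp_zero, mul_one]
  have he : Real.exp (-b*r^2) = Real.exp (-(b/2)*r^2) * Real.exp (-(b/2)*r^2) := by
    rw [← Real.exp_add]; ring_nf
  have h6 : r^2 * Real.exp (-b*r^2) ≤ (2/b) * Real.exp (-(b/2)*r^2) := by
    rw [he, ← mul_assoc]
    exact mul_le_mul_of_nonneg_right h2 (Real.exp_pos _).le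
  have h7 : Real.exp (-b*r^2) * r ≤ Real.exp (-b*r^2) * (1 + r^2) :=
    mul_le_mul_of_nonneg_left h1 (Real.exp_pos _).le
  have h8 : Real.exp (-b*r^2) * (1 + r^2) = Real.exp (-b*r^2) + r^2 * Real.exp (-b*r^2) := by ring
  simp only [Pi.add_apply]
  rw [← hrdef]
  linarith

theorem abs_log_gaussian_integral_bound_2d (t : ℝ) (ht : 0 < t) :
    (∀ x : EuclideanSpace ℝ (Fin 2),
      (∫ y : EuclideanSpace ℝ (Fin 2), p 2 t y * |Real.log ‖y - x‖|) ≤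
        1 / t + ‖x‖ + ∫ y : EuclideanSpace ℝ (Fin 2), p 2 t y * ‖y‖) ∧
    ∃ C : ℝ, ∀ᶠ x in nhds (0 : EuclideanSpace ℝ (Fin 2)),
      (∫ y : EuclideanSpace ℝ (Fin 2), p 2 t y * |Real.log ‖y - x‖|) ≤ C := by
  have hπ : 0 < Real.pi := Real.pi_pos
  set c : ℝ := (2 * Real.pi * t)⁻¹ with hc
  have hb : 0 < (2*t)⁻¹ := by positivity
  have hcpos : 0 < c := by positivity
  have hp : ∀ y : EuclideanSpace ℝ (Fin 2),
      p 2 t y = c * Real.exp (-(2*t)⁻¹ * ‖y‖^2) := by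
    intro y
    rw [p]
    congr 1
    · rw [show (-((2:ℕ) : ℝ) / 2) = -1 by norm_num, Real.rpow_neg_one]
    · congr 1
      field_simp
  have hpnn : ∀ y, 0 ≤ p 2 t y := fun y => by rw [hp]; positivity
  have hple : ∀ y, p 2 t y ≤ c := by
    intro y
    rw [hp]
    nth_rewrite 2 [← mul_one c]
    refine mul_le_mul_of_nonneg_left ?_ hcpos.le
    rw [Real.exp_le_one_iff]
    have h0 : 0 ≤ (2*t)⁻¹ * ‖y‖^2 := by positivity
    linarith
  have hIexp : Integrable (fun y : EuclideanSpace ℝ (Fin 2) => Real.exp (-(2*t)⁻¹ * ‖y‖^2)) :=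
    integrable_gauss hb
  have hIp : Integrable (fun y : EuclideanSpace ℝ (Fin 2) => p 2 t y) :=
    (hIexp.const_mul c).congr (Filter.Eventually.of_forall fun y => (hp y).symm)
  have hIpn : Integrable (fun y : EuclideanSpace ℝ (Fin 2) => p 2 t y * ‖y‖) := by
    refine ((integrable_gauss_norm hb).const_mul c).congr
      (Filter.Eventually.of_forall fun y => ?_)
    simp only []
    rw [hp y]; ring
  have hIg : ∫ y : EuclideanSpace ℝ (Fin 2), Real.exp (-(2*t)⁻¹ * ‖y‖^2) = 2*Real.pi*t := by
    rw [GaussianFourier.integral_rexp_neg_mul_sq_norm hb, finrank_euclideanSpace_fin,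
      show (((2:ℕ):ℝ)/2) = 1 by norm_num, Real.rpow_one, div_inv_eq_mul]
    ring
  have hintp : (∫ y : EuclideanSpace ℝ (Fin 2), p 2 t y) = 1 := by
    simp_rw [hp]
    rw [MeasureTheory.integral_const_mul, hIg, hc]
    field_simp
  have main : ∀ x : EuclideanSpace ℝ (Fin 2),
      (∫ y : EuclideanSpace ℝ (Fin 2), p 2 t y * |Real.log ‖y - x‖|) ≤
        1/t + ‖x‖ + ∫ y : EuclideanSpace ℝ (Fin 2), p 2 t y * ‖y‖ := by
    intro x
    have hPhiSub : Integrable (fun y : EuclideanSpace ℝ (Fin 2) => Phi (y - x)) :=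
      integrable_Phi.comp_sub_right x
    have hIF : Integrable (fun y : EuclideanSpace ℝ (Fin 2) => c * Phi (y - x)) :=
      hPhiSub.const_mul c
    have hIG : Integrable (fun y : EuclideanSpace ℝ (Fin 2) => p 2 t y * (‖y‖ + ‖x‖)) := by
      refine (hIpn.add (hIp.mul_const ‖x‖)).congr (Filter.Eventually.of_forall fun y => ?_)
      simp only [Pi.add_apply]
      ring
    have hbound : ∀ y, p 2 t y * |Real.log ‖y - x‖| ≤
        c * Phi (y - x) + p 2 t y * (‖y‖ + ‖x‖) := by
      intro y
      have hGnn : 0 ≤ p 2 t y * (‖y‖ + ‖x‖) :=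
        mul_nonneg (hpnn y) (add_nonneg (norm_nonneg _) (norm_nonneg _))
      by_cases h1 : ‖y - x‖ < 1
      · have hmem : y - x ∈ Metric.ball (0 : EuclideanSpace ℝ (Fin 2)) 1 :=
          mem_ball_zero_iff.2 h1
        have hPhiEq : Phi (y - x) = -Real.log ‖y - x‖ := Set.indicator_of_mem hmem _
        have hlog : |Real.log ‖y - x‖| = -Real.log ‖y - x‖ :=
          abs_of_nonpos (Real.log_nonpos (norm_nonneg _) h1.le)
        rw [hlog, hPhiEq]
        have h2 : p 2 t y * -Real.log ‖y - x‖ ≤ c * -Real.log ‖y - x‖ :=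
          mul_le_mul_of_nonneg_right (hple y) (by rw [← hlog]; exact abs_nonneg _)
        linarith
      · have hPhiEq : Phi (y - x) = 0 :=
          Set.indicator_of_notMem (by simpa [mem_ball_zero_iff] using h1) _
        push_neg at h1
        have hlog : |Real.log ‖y - x‖| = Real.log ‖y - x‖ :=
          abs_of_nonneg (Real.log_nonneg h1)
        have h2 : Real.log ‖y - x‖ ≤ ‖y‖ + ‖x‖ := by
          have h3 := Real.log_le_sub_one_of_pos (lt_of_lt_of_le one_pos h1)
          have h4 : ‖y - x‖ ≤ ‖y‖ + ‖x‖ := norm_sub_le y x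
          linarith
        rw [hlog, hPhiEq, mul_zero, zero_add]
        exact mul_le_mul_of_nonneg_left h2 (hpnn y)
    have step1 : (∫ y : EuclideanSpace ℝ (Fin 2), p 2 t y * |Real.log ‖y - x‖|) ≤
        ∫ y : EuclideanSpace ℝ (Fin 2), (c * Phi (y - x) + p 2 t y * (‖y‖ + ‖x‖)) :=
      integral_mono_of_nonneg
        (Filter.Eventually.of_forall fun y => mul_nonneg (hpnn y) (abs_nonneg _))
        (hIF.add hIG) (Filter.Eventually.of_forall hbound)
    rw [integral_add hIF hIG] at step1
    have hFval : (∫ y : EuclideanSpace ℝ (Fin 2), c * Phi (y - x)) ≤ 1/t := by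
      rw [MeasureTheory.integral_const_mul, integral_sub_right_eq_self Phi x]
      have h5 : c * ∫ z, Phi z ≤ c * 4 :=
        mul_le_mul_of_nonneg_left integral_Phi_le hcpos.le
      have h6 : c * 4 ≤ 1/t := by
        rw [hc, inv_eq_one_div, div_mul_eq_mul_div, one_mul,
          div_le_div_iff₀ (by positivity) ht]
        nlinarith [Real.pi_gt_three]
      linarith
    have hGval : (∫ y : EuclideanSpace ℝ (Fin 2), p 2 t y * (‖y‖ + ‖x‖)) =
        (∫ y : EuclideanSpace ℝ (Fin 2), p 2 t y * ‖y‖) + ‖x‖ := by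
      have h7 : ∀ y : EuclideanSpace ℝ (Fin 2),
          p 2 t y * (‖y‖ + ‖x‖) = p 2 t y * ‖y‖ + p 2 t y * ‖x‖ := fun y => by ring
      simp_rw [h7]
      rw [integral_add hIpn (hIp.mul_const _), MeasureTheory.integral_mul_const, hintp, one_mul]
    rw [hGval] at step1
    linarith
  refine ⟨main, ⟨1/t + 1 + ∫ y : EuclideanSpace ℝ (Fin 2), p 2 t y * ‖y‖, ?_⟩⟩
  have hball : Metric.closedBall (0 : EuclideanSpace ℝ (Fin 2)) 1 ∈
      nhds (0 : EuclideanSpace ℝ (Fin 2)) := Metric.closedBall_mem_nhds 0 one_pos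
  filter_upwards [hball] with x hx
  have hx1 : ‖x‖ ≤ 1 := mem_closedBall_zero_iff.1 hx
  have hm := main x
  linarith
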